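/- Let ℓ ≠ 7 be a prime with ζ₇ ∈ 𝔽̄_ℓ a primitive 7th root of unity, and let g_∞ act diagonally on V = 𝔽̄_ℓ⁷ with basis v₁,...,v₇, g_∞·vᵢ = ζ₇ⁱvᵢ (so v₇ has eigenvalue 1). Let h act by the 6-cycle permutation v₁↦v₃↦v₂↦v₆↦v₄↦v₅↦v₁ (fixing v₇, up to diagonal twist). Then V₂ = span(v₁,...,v₆) is an irreducible module for the group generated by g_∞ and h. -/
import Mathlib


open Matrix

/-- Let `ℓ ≠ 7`, `ζ₇ ∈ 𝔽̄_ℓ` a primitive 7th root of unity,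
`g_∞` acting diagonally with `g_∞ vᵢ = ζ₇ⁱ vᵢ` (`v₇` of eigenvalue 1), and `h`
acting (up to diagonal twist) by the 6-cycle `v₁↦v₃↦v₂↦v₆↦v₄↦v₅↦v₁`, fixing
`v₇`. Then `V₂ = span(v₁,...,v₆)` is irreducible for the group generated by
`g_∞` and `h`. -/
theorem V2_irreducible
    (ℓ : ℕ) [Fact ℓ.Prime] (h7 : ℓ ≠ 7)
    (K : Type*) [Field K] [IsAlgClosed K] [CharP K ℓ]
    (ζ : K) (hζ : IsPrimitiveRoot ζ 7)
    (g : Matrix (Fin 7) (Fin 7) K)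
    (hg : g = Matrix.diagonal fun i : Fin 7 => ζ ^ ((i : ℕ) + 1))
    (σ : Equiv.Perm (Fin 7))
    (hσ : σ 0 = 2 ∧ σ 2 = 1 ∧ σ 1 = 5 ∧ σ 5 = 3 ∧ σ 3 = 4 ∧ σ 4 = 0 ∧ σ 6 = 6)
    (d : Fin 7 → K) (hd : ∀ i, d i ≠ 0)
    (h : Matrix (Fin 7) (Fin 7) K)
    (hh : h = (σ.permMatrix K) * Matrix.diagonal d)
    (V₂ : Submodule K (Fin 7 → K)) (hV₂ : ∀ v : Fin 7 → K, v ∈ V₂ ↔ v 6 = 0) :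
    ∀ U : Submodule K (Fin 7 → K), U ≤ V₂ →
      (∀ v ∈ U, g.mulVec v ∈ U) → (∀ v ∈ U, h.mulVec v ∈ U) →
      U = ⊥ ∨ U = V₂ := by
  intro U hUV hgU hhU
  classical
  by_cases hbot : U = ⊥
  · exact Or.inl hbot
  right
  -- eigenvalues of g are distinct away from index 6
  have hne : ∀ i j : Fin 7, i ≠ 6 → j ≠ 6 → i ≠ j →
      ζ ^ ((i : ℕ) + 1) ≠ ζ ^ ((j : ℕ) + 1) := by
    intro i j hi hj hij e
    have hi6 : (i : ℕ) ≠ 6 := fun hc => hi (Fin.ext hc)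
    have hj6 : (j : ℕ) ≠ 6 := fun hc => hj (Fin.ext hc)
    have hi7 := i.isLt
    have hj7 := j.isLt
    have := hζ.pow_inj (by omega) (by omega) e
    exact hij (Fin.ext (by omega))
  -- key: components of elements of U are in U
  have key : ∀ n (v : Fin 7 → K), v ∈ U → v 6 = 0 →
      (Finset.univ.filter (fun k => v k ≠ 0)).card ≤ n →
      ∀ i, Pi.single i (v i) ∈ U := by
    intro n
    induction n with
    | zero =>
      intro v hv hv6 hcard i
      have : v i = 0 := by
        by_contra hvi
        have : i ∈ Finset.univ.filter (fun k => v k ≠ 0) := by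
          simp [hvi]
        have := Finset.card_pos.mpr ⟨i, this⟩
        omega
      simpa [this] using U.zero_mem
    | succ n ih =>
      intro v hv hv6 hcard i
      by_cases hvi : v i = 0
      · simpa [hvi] using U.zero_mem
      have hi6 : i ≠ 6 := fun hc => hvi (hc ▸ hv6)
      by_cases hex : ∃ j, j ≠ i ∧ v j ≠ 0
      · obtain ⟨j, hji, hvj⟩ := hex
        have hj6 : j ≠ 6 := fun hc => hvj (hc ▸ hv6)
        set c := ζ ^ ((j : ℕ) + 1) with hc
        set w : Fin 7 → K := g.mulVec v - c • v with hw
        have hwU : w ∈ U := U.sub_mem (hgU v hv) (U.smul_mem c hv)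
        have hwk : ∀ k, w k = (ζ ^ ((k : ℕ) + 1) - c) * v k := by
          intro k
          simp [hw, hg, Matrix.mulVec_diagonal, sub_mul]
        have hw6 : w 6 = 0 := by rw [hwk]; simp [hv6]
        have hwj : w j = 0 := by rw [hwk]; simp [hc]
        have hsub : (Finset.univ.filter (fun k => w k ≠ 0)) ⊆
            (Finset.univ.filter (fun k => v k ≠ 0)).erase j := by
          intro k hk
          simp only [Finset.mem_filter, Finset.mem_univ, true_and] at hk
          refine Finset.mem_erase.mpr ⟨fun hc' => hk (hc' ▸ hwj), ?_⟩
          simp only [Finset.mem_filter, Finset.mem_univ, true_and]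
          intro hvk
          exact hk (by rw [hwk, hvk, mul_zero])
        have hjmem : j ∈ Finset.univ.filter (fun k => v k ≠ 0) := by simp [hvj]
        have hcard' : (Finset.univ.filter (fun k => w k ≠ 0)).card ≤ n := by
          have h1 := Finset.card_le_card hsub
          have h2 := Finset.card_erase_of_mem hjmem
          have h3 := Finset.card_pos.mpr ⟨j, hjmem⟩
          omega
        have hwi := ih w hwU hw6 hcard' i
        have hfac : ζ ^ ((i : ℕ) + 1) - c ≠ 0 :=
          sub_ne_zero_of_ne (hne i j hi6 hj6 (fun hc' => hji (hc' ▸ rfl)))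
        have : (ζ ^ ((i : ℕ) + 1) - c)⁻¹ • (Pi.single i (w i) : Fin 7 → K) = Pi.single i (v i) := by
          rw [hwk]
          funext k
          rcases eq_or_ne k i with rfl | hk
          · simp [inv_mul_cancel_left₀ hfac]
          · simp [Pi.single_eq_of_ne hk]
        exact this ▸ U.smul_mem _ hwi
      · push_neg at hex
        have : v = Pi.single i (v i) := by
          funext k
          rcases eq_or_ne k i with rfl | hk
          · simp
          · simp [Pi.single_eq_of_ne hk, hex k hk]
        exact this ▸ hv
  -- get a standard basis vector in U
  obtain ⟨v, hvU, hvne⟩ := Submodule.ne_bot_iff U |>.mp hbot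
  have hv6 : v 6 = 0 := (hV₂ v).mp (hUV hvU)
  obtain ⟨i₀, hvi₀⟩ : ∃ i, v i ≠ 0 := Function.ne_iff.mp hvne
  have hsingle : Pi.single i₀ (v i₀) ∈ U := key 7 v hvU hv6 (by
    have := Finset.card_le_univ (Finset.univ.filter (fun k => v k ≠ 0))
    simpa using this) i₀
  have hone : Pi.single i₀ (1 : K) ∈ U := by
    have : (v i₀)⁻¹ • (Pi.single i₀ (v i₀) : Fin 7 → K) = Pi.single i₀ (1 : K) := by
      funext k
      rcases eq_or_ne k i₀ with rfl | hk
      · simp [inv_mul_cancel₀ hvi₀]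
      · simp [Pi.single_eq_of_ne hk]
    exact this ▸ U.smul_mem _ hsingle
  -- step via h
  have hstep : ∀ i : Fin 7, Pi.single (σ i) (1 : K) ∈ U → Pi.single i (1 : K) ∈ U := by
    intro i hmem
    have hcomp : h.mulVec (Pi.single (σ i) (1:K)) = Pi.single i (d (σ i)) := by
      funext k
      simp [hh, Matrix.mulVec, dotProduct, Equiv.Perm.permMatrix, PEquiv.toMatrix,
        Equiv.toPEquiv, Matrix.diagonal, Pi.single_apply, Finset.mul_sum, mul_ite, ite_and,
        Matrix.mul_apply]
    have h1 : Pi.single i (d (σ i)) ∈ U := hcomp ▸ hhU _ hmem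
    have : (d (σ i))⁻¹ • (Pi.single i (d (σ i)) : Fin 7 → K) = Pi.single i (1 : K) := by
      funext k
      rcases eq_or_ne k i with rfl | hk
      · simp only [Pi.smul_apply, Pi.single_eq_same, smul_eq_mul]
        exact inv_mul_cancel₀ (hd _)
      · simp [Pi.single_eq_of_ne hk]
    exact this ▸ U.smul_mem _ h1
  obtain ⟨hσ0, hσ2, hσ1, hσ5, hσ3, hσ4, hσ6⟩ := hσ
  have s20 : Pi.single (2:Fin 7) (1:K) ∈ U → Pi.single (0:Fin 7) (1:K) ∈ U := fun hm => hstep 0 (hσ0 ▸ hm)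
  have s12 : Pi.single (1:Fin 7) (1:K) ∈ U → Pi.single (2:Fin 7) (1:K) ∈ U := fun hm => hstep 2 (hσ2 ▸ hm)
  have s51 : Pi.single (5:Fin 7) (1:K) ∈ U → Pi.single (1:Fin 7) (1:K) ∈ U := fun hm => hstep 1 (hσ1 ▸ hm)
  have s35 : Pi.single (3:Fin 7) (1:K) ∈ U → Pi.single (5:Fin 7) (1:K) ∈ U := fun hm => hstep 5 (hσ5 ▸ hm)
  have s43 : Pi.single (4:Fin 7) (1:K) ∈ U → Pi.single (3:Fin 7) (1:K) ∈ U := fun hm => hstep 3 (hσ3 ▸ hm)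
  have s04 : Pi.single (0:Fin 7) (1:K) ∈ U → Pi.single (4:Fin 7) (1:K) ∈ U := fun hm => hstep 4 (hσ4 ▸ hm)
  have hi₀6 : i₀ ≠ 6 := fun hc => hvi₀ (hc ▸ hv6)
  have h2 : Pi.single (2 : Fin 7) (1:K) ∈ U := by
    fin_cases i₀
    · exact s12 (s51 (s35 (s43 (s04 hone))))
    · exact s12 hone
    · exact hone
    · exact s12 (s51 (s35 hone))
    · exact s12 (s51 (s35 (s43 hone)))
    · exact s12 (s51 hone)
    · exact absurd rfl hi₀6
  have h0 := s20 h2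
  have h4 := s04 h0
  have h3 := s43 h4
  have h5 := s35 h3
  have h1 := s51 h5
  have hall : ∀ j : Fin 7, j ≠ 6 → Pi.single j (1:K) ∈ U := by
    intro j hj
    fin_cases j
    · exact h0
    · exact h1
    · exact h2
    · exact h3
    · exact h4
    · exact h5
    · exact absurd rfl hj
  -- conclude
  apply le_antisymm hUV
  intro w hw
  have hw6 : w 6 = 0 := (hV₂ w).mp hw
  have : w = ∑ j, Pi.single j (w j) := (Finset.univ_sum_single w).symm
  rw [this]
  apply Submodule.sum_mem
  intro j _
  rcases eq_or_ne j 6 with rfl | hj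
  · simpa [hw6] using U.zero_mem
  · have : (w j) • (Pi.single j (1:K) : Fin 7 → K) = Pi.single j (w j) := by
      funext k
      rcases eq_or_ne k j with rfl | hk
      · simp
      · simp [Pi.single_eq_of_ne hk]
    exact this ▸ U.smul_mem _ (hall j hj)
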